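/- For every ψ ∈ L¹ on the circle, ∫_{-π}^{π} (1 − cos ψ̃(θ)) dθ ≤ 2K₀ ‖ψ‖_{L¹}, where K₀ = (K/2) ∫₀^π (sin λ)/λ dλ and K is the Kolmogorov weak (1,1) constant of the conjugation operator. -/

import Mathlib

open MeasureTheory Set
open scoped ENNReal

/-- Kolmogorov's best weak-(1,1) constant
`K = (1 + 3⁻² + 5⁻² + ⋯)/(1 − 3⁻² + 5⁻² − ⋯)`. -/
noncomputable def kolmogorovK : ℝ :=
  (∑' n : ℕ, (1 : ℝ) / (2 * (n : ℝ) + 1) ^ 2) /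
    (∑' n : ℕ, (-1 : ℝ) ^ n / (2 * (n : ℝ) + 1) ^ 2)


lemma summ_odd_sq : Summable (fun n : ℕ => (1:ℝ)/(2*(n:ℝ)+1)^2) := by
  have h : Summable (fun n : ℕ => (1:ℝ)/((n:ℝ)+1)^2) := by
    have := (summable_nat_add_iff (f := fun n : ℕ => (1:ℝ)/(n:ℝ)^2) 1).mpr
      (Real.summable_one_div_nat_pow.mpr one_lt_two)
    simpa using this
  refine Summable.of_nonneg_of_le (fun n => by positivity) (fun n => ?_) h
  apply one_div_le_one_div_of_le
  · positivity
  · nlinarith [Nat.cast_nonneg (α := ℝ) n]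

lemma kolmogorovK_nonneg' : 0 ≤ (∑' n : ℕ, (1 : ℝ) / (2 * (n : ℝ) + 1) ^ 2) /
    (∑' n : ℕ, (-1 : ℝ) ^ n / (2 * (n : ℝ) + 1) ^ 2) := by
  have hs := summ_odd_sq
  set f : ℕ → ℝ := fun n => (-1:ℝ)^n / (2*(n:ℝ)+1)^2 with hf
  have hfs : Summable f := by
    refine Summable.of_abs (hs.congr fun n => ?_)
    rw [hf]
    rw [abs_div, abs_pow, abs_neg, abs_one, one_pow, abs_of_nonneg (by positivity)]
  have he : Summable (fun k : ℕ => f (2*k)) := hfs.comp_injective (fun a b => by omega)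
  have ho : Summable (fun k : ℕ => f (2*k+1)) := hfs.comp_injective (fun a b => by omega)
  have hsum := tsum_even_add_odd he ho
  have hA : ∀ k : ℕ, f (2*k) = 1/(4*(k:ℝ)+1)^2 := by
    intro k
    have h1 : ((-1:ℝ))^(2*k) = 1 := Even.neg_one_pow ⟨k, by ring⟩
    rw [hf]; push_cast; rw [h1]; ring_nf
  have hB : ∀ k : ℕ, f (2*k+1) = -(1/(4*(k:ℝ)+3)^2) := by
    intro k
    have h1 : ((-1:ℝ))^(2*k+1) = -1 := Odd.neg_one_pow ⟨k, by ring⟩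
    rw [hf]; push_cast; rw [h1]; ring_nf
  have hBs : Summable (fun k : ℕ => 1/(4*(k:ℝ)+3)^2) := by
    refine ho.neg.congr fun k => ?_; rw [hB]; ring
  have hD : 0 ≤ ∑' n, f n := by
    rw [← hsum]
    have h2 : ∑' k, f (2*k+1) = - ∑' k : ℕ, 1/(4*(k:ℝ)+3)^2 := by
      rw [tsum_congr hB, tsum_neg]
    rw [h2]
    have hle : (∑' k : ℕ, 1/(4*(k:ℝ)+3)^2) ≤ ∑' k, f (2*k) := by
      refine Summable.tsum_le_tsum (fun k => ?_) hBs he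
      rw [hA]
      apply one_div_le_one_div_of_le
      · positivity
      · nlinarith [Nat.cast_nonneg (α := ℝ) k]
    linarith
  exact div_nonneg (tsum_nonneg fun n => by positivity) hD

lemma kolmogorovK_nonneg : 0 ≤ kolmogorovK := kolmogorovK_nonneg'


lemma step1 (u : ℝ) :
    ENNReal.ofReal (1 - Real.cos u) ≤
      ∫⁻ l in Ioc 0 Real.pi,
        ENNReal.ofReal (Real.sin l) * (Iic |u|).indicator (fun _ => (1:ℝ≥0∞)) l := by
  set m := min Real.pi |u| with hm
  have hm0 : 0 ≤ m := le_min Real.pi_pos.le (abs_nonneg u)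
  have hmpi : m ≤ Real.pi := min_le_left _ _
  have hcalc : (∫⁻ l in Ioc 0 Real.pi,
      ENNReal.ofReal (Real.sin l) * (Iic |u|).indicator (fun _ => (1:ℝ≥0∞)) l)
      = ENNReal.ofReal (1 - Real.cos m) := by
    have h1 : ∀ l, ENNReal.ofReal (Real.sin l) * (Iic |u|).indicator (fun _ => (1:ℝ≥0∞)) l
        = (Iic |u|).indicator (fun l => ENNReal.ofReal (Real.sin l)) l := by
      intro l; by_cases h : l ∈ Iic |u| <;> simp [h]
    simp_rw [h1]
    rw [lintegral_indicator measurableSet_Iic,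
      Measure.restrict_restrict measurableSet_Iic, Set.inter_comm, Set.Ioc_inter_Iic, ← hm]
    rw [← ofReal_integral_eq_lintegral_ofReal
      (Real.continuous_sin.integrableOn_Ioc)
      ((ae_restrict_iff' measurableSet_Ioc).mpr (ae_of_all _ fun l hl =>
        Real.sin_nonneg_of_nonneg_of_le_pi hl.1.le (hl.2.trans hmpi)))]
    rw [← intervalIntegral.integral_of_le hm0, integral_sin, Real.cos_zero]
  rw [hcalc]
  apply ENNReal.ofReal_le_ofReal
  rcases le_total |u| Real.pi with h | h
  · have h2 : m = |u| := min_eq_right h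
    rw [h2, Real.cos_abs]
  · have h2 : m = Real.pi := min_eq_left h
    rw [h2, Real.cos_pi]
    nlinarith [Real.neg_one_le_cos u]

/-- Lemma 4: `∫ (1 − cos ψ̃) ≤ 2 K₀ ‖ψ‖₁`, where `K₀ = (kolmogorovK/2) ∫₀^π sin λ/λ dλ`
and `kolmogorovK` is the Kolmogorov weak (1,1) constant of the conjugation operator `T`. -/
theorem stmt6
    (T : (ℝ → ℝ) → (ℝ → ℝ))
    (hweak : ∀ φ : ℝ → ℝ, IntegrableOn φ (Ico (-Real.pi) Real.pi) →
      ∀ lam > (0 : ℝ),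
        volume {θ ∈ Ico (-Real.pi) Real.pi | lam ≤ |T φ θ|} ≤
          ENNReal.ofReal ((kolmogorovK / lam) * ∫ θ in Ico (-Real.pi) Real.pi, |φ θ|))
    (ψ : ℝ → ℝ) (hψ : IntegrableOn ψ (Ico (-Real.pi) Real.pi))
    (hTmeas : Measurable (T ψ)) :
    ∫ θ in Ico (-Real.pi) Real.pi, (1 - Real.cos (T ψ θ)) ≤
      2 * (kolmogorovK / 2 * ∫ lam in (0 : ℝ)..Real.pi, Real.sin lam / lam) *
        ∫ θ in Ico (-Real.pi) Real.pi, |ψ θ| := by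
  set E : Set ℝ := Ico (-Real.pi) Real.pi with hE
  set K : ℝ := kolmogorovK with hK
  have hK0 : 0 ≤ K := kolmogorovK_nonneg
  set I : ℝ := ∫ θ in E, |ψ θ| with hI
  have hI0 : 0 ≤ I := integral_nonneg fun θ => abs_nonneg _
  set J : ℝ := ∫ lam in (0:ℝ)..Real.pi, Real.sin lam / lam with hJ
  have hJ0 : 0 ≤ J := by
    refine intervalIntegral.integral_nonneg Real.pi_pos.le fun l hl => ?_
    exact div_nonneg (Real.sin_nonneg_of_nonneg_of_le_pi hl.1 hl.2) hl.1
  -- the two-variable function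
  set g : ℝ → ℝ → ℝ≥0∞ := fun θ l =>
    ENNReal.ofReal (Real.sin l) * (Iic |T ψ θ|).indicator (fun _ => (1:ℝ≥0∞)) l with hg
  -- convert LHS to lintegral
  have hf_nn : 0 ≤ᵐ[volume.restrict E] fun θ => 1 - Real.cos (T ψ θ) :=
    ae_of_all _ fun θ => by simp only [Pi.zero_apply]; nlinarith [Real.cos_le_one (T ψ θ)]
  have hf_meas : AEStronglyMeasurable (fun θ => 1 - Real.cos (T ψ θ)) (volume.restrict E) :=
    ((measurable_const.sub (Real.measurable_cos.comp hTmeas)).aestronglyMeasurable)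
  have hLHS : ∫ θ in E, (1 - Real.cos (T ψ θ)) =
      (∫⁻ θ in E, ENNReal.ofReal (1 - Real.cos (T ψ θ))).toReal := by
    rw [integral_eq_lintegral_of_nonneg_ae hf_nn hf_meas]
  -- step A: pointwise bound and swap
  have hswap : (∫⁻ θ in E, ∫⁻ l in Ioc 0 Real.pi, g θ l) =
      ∫⁻ l in Ioc 0 Real.pi, ∫⁻ θ in E, g θ l := by
    have hmeas : Measurable (Function.uncurry g) := by
      have h1 : Function.uncurry g = fun p : ℝ × ℝ =>
          ENNReal.ofReal (Real.sin p.2) *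
            Set.indicator {p : ℝ × ℝ | p.2 ≤ |T ψ p.1|} (fun _ => (1:ℝ≥0∞)) p := by
        funext p
        simp only [Function.uncurry, hg, Set.indicator_apply, mem_Iic, mem_setOf_eq]
      rw [h1]
      have hset : MeasurableSet {p : ℝ × ℝ | p.2 ≤ |T ψ p.1|} :=
        measurableSet_le measurable_snd ((hTmeas.comp measurable_fst).abs)
      exact ((ENNReal.measurable_ofReal.comp (Real.measurable_sin.comp measurable_snd)).mul
        (measurable_const.indicator hset))
    exact lintegral_lintegral_swap hmeas.aemeasurable
  -- inner θ-integral bound for fixed l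
  have hinner : ∀ l ∈ Ioc (0:ℝ) Real.pi,
      (∫⁻ θ in E, g θ l) ≤ ENNReal.ofReal (Real.sin l * (K / l * I)) := by
    intro l hl
    have hsin : 0 ≤ Real.sin l := Real.sin_nonneg_of_nonneg_of_le_pi hl.1.le hl.2
    have h1 : ∀ θ, g θ l = ENNReal.ofReal (Real.sin l) *
        Set.indicator {θ : ℝ | l ≤ |T ψ θ|} (fun _ => (1:ℝ≥0∞)) θ := by
      intro θ; simp only [hg, Set.indicator_apply, mem_Iic, mem_setOf_eq]
    have hset : MeasurableSet {θ : ℝ | l ≤ |T ψ θ|} :=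
      measurableSet_le measurable_const hTmeas.abs
    calc (∫⁻ θ in E, g θ l)
        = ENNReal.ofReal (Real.sin l) *
            ∫⁻ θ in E, Set.indicator {θ : ℝ | l ≤ |T ψ θ|} (fun _ => (1:ℝ≥0∞)) θ := by
          simp_rw [h1]; rw [lintegral_const_mul _ (measurable_const.indicator hset)]
      _ = ENNReal.ofReal (Real.sin l) * volume ({θ : ℝ | l ≤ |T ψ θ|} ∩ E) := by
          rw [lintegral_indicator hset, setLIntegral_one, Measure.restrict_apply hset]
      _ ≤ ENNReal.ofReal (Real.sin l) * ENNReal.ofReal ((K / l) * I) := by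
          gcongr
          have h2 : {θ : ℝ | l ≤ |T ψ θ|} ∩ E = {θ ∈ E | l ≤ |T ψ θ|} := by
            ext θ; simp [and_comm]
          rw [h2]
          exact hweak ψ hψ l hl.1
      _ = ENNReal.ofReal (Real.sin l * (K / l * I)) := by
          rw [← ENNReal.ofReal_mul hsin]
  -- integrability of the λ-side bound
  have hint : IntegrableOn (fun l => Real.sin l * (K / l * I)) (Ioc 0 Real.pi) := by
    have hb : ∀ᵐ l ∂(volume.restrict (Ioc 0 Real.pi)),
        ‖Real.sin l * (K / l * I)‖ ≤ K * I := by
      refine (ae_restrict_iff' measurableSet_Ioc).mpr (ae_of_all _ fun l hl => ?_)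
      have hsin : 0 ≤ Real.sin l := Real.sin_nonneg_of_nonneg_of_le_pi hl.1.le hl.2
      have hsl : Real.sin l ≤ l := Real.sin_le hl.1.le
      rw [Real.norm_eq_abs, abs_of_nonneg (mul_nonneg hsin (mul_nonneg (div_nonneg hK0 hl.1.le) hI0))]
      have h3 : Real.sin l * (K / l * I) = (Real.sin l / l) * (K * I) := by
        field_simp
      rw [h3]
      have h4 : Real.sin l / l ≤ 1 := by
        rw [div_le_one hl.1]; exact hsl
      nlinarith [mul_nonneg hK0 hI0, div_nonneg hsin hl.1.le]
    refine Integrable.mono' ((integrableOn_const_iff (C := K * I)).mpr (Or.inr measure_Ioc_lt_top)) ?_ hb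
    exact ((Real.measurable_sin.mul ((measurable_const.div measurable_id).mul
      measurable_const)).aestronglyMeasurable)
  have hbound_nn : 0 ≤ᵐ[volume.restrict (Ioc 0 Real.pi)] fun l => Real.sin l * (K / l * I) := by
    refine (ae_restrict_iff' measurableSet_Ioc).mpr (ae_of_all _ fun l hl => ?_)
    have hsin : 0 ≤ Real.sin l := Real.sin_nonneg_of_nonneg_of_le_pi hl.1.le hl.2
    simp only [Pi.zero_apply]
    exact mul_nonneg hsin (mul_nonneg (div_nonneg hK0 hl.1.le) hI0)
  -- value of the λ-integral
  have hval : (∫ l in Ioc 0 Real.pi, Real.sin l * (K / l * I)) = K * I * J := by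
    have h5 : ∀ l ∈ Ioc (0:ℝ) Real.pi, Real.sin l * (K / l * I) = (K * I) * (Real.sin l / l) := by
      intro l hl; field_simp
    rw [setIntegral_congr_fun measurableSet_Ioc h5, integral_const_mul, hJ,
      intervalIntegral.integral_of_le Real.pi_pos.le]
  -- main chain
  have hchain : (∫⁻ θ in E, ENNReal.ofReal (1 - Real.cos (T ψ θ))) ≤
      ENNReal.ofReal (K * I * J) := by
    calc (∫⁻ θ in E, ENNReal.ofReal (1 - Real.cos (T ψ θ)))
        ≤ ∫⁻ θ in E, ∫⁻ l in Ioc 0 Real.pi, g θ l :=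
          lintegral_mono fun θ => step1 (T ψ θ)
      _ = ∫⁻ l in Ioc 0 Real.pi, ∫⁻ θ in E, g θ l := hswap
      _ ≤ ∫⁻ l in Ioc 0 Real.pi, ENNReal.ofReal (Real.sin l * (K / l * I)) := by
          refine lintegral_mono_ae ((ae_restrict_iff' measurableSet_Ioc).mpr
            (ae_of_all _ fun l hl => hinner l hl))
      _ = ENNReal.ofReal (∫ l in Ioc 0 Real.pi, Real.sin l * (K / l * I)) :=
          (ofReal_integral_eq_lintegral_ofReal hint hbound_nn).symm
      _ = ENNReal.ofReal (K * I * J) := by rw [hval]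
  rw [hLHS]
  have hfinal : (∫⁻ θ in E, ENNReal.ofReal (1 - Real.cos (T ψ θ))).toReal ≤ K * I * J := by
    calc (∫⁻ θ in E, ENNReal.ofReal (1 - Real.cos (T ψ θ))).toReal
        ≤ (ENNReal.ofReal (K * I * J)).toReal :=
          ENNReal.toReal_mono ENNReal.ofReal_ne_top hchain
      _ = K * I * J := ENNReal.toReal_ofReal (by positivity)
  linarith [hfinal, (by ring : 2 * (K / 2 * J) * I = K * I * J)]
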